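/- Let G be an infinite, connected, locally finite simple graph on a countable vertex set V satisfying the sphere condition. Let D ≥ 2 be an integer and let η = (η_v)_{v∈V} be i.i.d. random variables, each uniformly distributed on {1, …, D}. Then for all distinct u, v ∈ V and every integer n ≥ 1, P( Z_{u,i}(η) = Z_{v,i}(η) for all 1 ≤ i ≤ n ) ≤ D^{−n}. -/

import Mathlib

open MeasureTheory ProbabilityTheory ENNReal

/-- `sphereSum G D η v n` is `Z_{v,n}(η) = ∑_{w : dist(w,v) = n} η_w`, where
`η : V → Fin D` encodes a configuration with values in `{1, …, D}` via
`w ↦ (η w : ℕ) + 1`. The sum is a finite sum (`finsum`) by local finiteness. -/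
noncomputable def sphereSum {V : Type*} (G : SimpleGraph V) {D : ℕ}
    (η : V → Fin D) (v : V) (n : ℕ) : ℕ :=
  ∑ᶠ w ∈ {w : V | G.dist w v = n}, ((η w : ℕ) + 1)

/-- Balls in a connected locally finite graph are finite. -/
lemma ball_finite_aux {V : Type*} (G : SimpleGraph V) (hconn : G.Connected)
    [G.LocallyFinite] (p : V) : ∀ m : ℕ, {w : V | G.dist w p ≤ m}.Finite := by
  intro m
  induction m with
  | zero =>
    apply Set.Finite.subset (Set.finite_singleton p)
    intro w hw
    simp only [Set.mem_setOf_eq, Nat.le_zero] at hw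
    exact (hconn.dist_eq_zero_iff.mp hw)
  | succ m ih =>
    apply Set.Finite.subset
      (ih.union (ih.biUnion (fun z _ => (G.neighborSet z).toFinite)))
    intro w hw
    simp only [Set.mem_setOf_eq] at hw
    rcases Nat.lt_or_ge (G.dist w p) (m + 1) with h | h
    · exact Or.inl (Nat.lt_succ_iff.mp h)
    · have hd : G.dist w p = m + 1 := le_antisymm hw h
      obtain ⟨q, hq⟩ := hconn.exists_walk_length_eq_dist w p
      rw [hd] at hq
      cases q with
      | nil => simp at hq
      | @cons _ z _ hadj q' =>
        have hq' : q'.length = m := by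
          simpa [SimpleGraph.Walk.length_cons] using hq
        refine Or.inr (Set.mem_biUnion (show z ∈ {w : V | G.dist w p ≤ m} from ?_) ?_)
        · simp only [Set.mem_setOf_eq]
          exact hq' ▸ SimpleGraph.dist_le q'
        · exact hadj.symm

/-- Let `G` be an infinite, connected, locally finite simple graph on a
countable vertex set `V` satisfying the sphere condition. Let `D ≥ 2` and let
`η = (η_v)_{v ∈ V}` be i.i.d., each uniform on `{1, …, D}`. Then for all distinct
`u, v ∈ V` and every `n ≥ 1`,
`P(Z_{u,i}(η) = Z_{v,i}(η) for all 1 ≤ i ≤ n) ≤ D^{-n}`. -/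
theorem stmt8 {V : Type*} [Countable V] [Infinite V] (G : SimpleGraph V)
    (hconn : G.Connected) [G.LocallyFinite]
    (hsphere : ∀ u v : V, u ≠ v → ∀ r : ℕ, 1 ≤ r →
      ∃ w : V, G.dist w v = r ∧ r < G.dist w u)
    (D : ℕ) (hD : 2 ≤ D)
    {Ω : Type*} [MeasurableSpace Ω] (P : Measure Ω) [IsProbabilityMeasure P]
    (η : V → Ω → Fin D)
    (hmeas : ∀ v : V, Measurable (η v))
    (hindep : iIndepFun η P)
    (hunif : ∀ (v : V) (s : Fin D), P {ω | η v ω = s} = (D : ℝ≥0∞)⁻¹)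
    (u v : V) (huv : u ≠ v) (n : ℕ) (hn : 1 ≤ n) :
    P {ω | ∀ i : ℕ, 1 ≤ i → i ≤ n →
        sphereSum G (fun w => η w ω) u i = sphereSum G (fun w => η w ω) v i}
      ≤ (D : ℝ≥0∞)⁻¹ ^ n := by
  classical
  have hD0 : 0 < D := by omega
  have hsphfin : ∀ (p : V) (i : ℕ), {w : V | G.dist w p = i}.Finite := fun p i =>
    (ball_finite_aux G hconn p i).subset (fun w h => le_of_eq h)
  have hsum : ∀ (η' : V → Fin D) (p : V) (i : ℕ),
      sphereSum G η' p i = ∑ w ∈ (hsphfin p i).toFinset, ((η' w : ℕ) + 1) :=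
    fun η' p i => finsum_mem_eq_finite_toFinset_sum _ _
  suffices H : ∀ k : ℕ,
      P {ω | ∀ i : ℕ, 1 ≤ i → i ≤ k →
        sphereSum G (fun w => η w ω) u i = sphereSum G (fun w => η w ω) v i}
      ≤ (D : ℝ≥0∞)⁻¹ ^ k from H n
  intro k
  induction k with
  | zero => simpa using (prob_le_one (μ := P))
  | succ k ih =>
    obtain ⟨x, hxv, hxu⟩ := hsphere u v huv (k + 1) (by omega)
    have hT : ({w : V | G.dist w u ≤ k + 1} ∪ {w : V | G.dist w v ≤ k + 1}).Finite :=
      (ball_finite_aux G hconn u (k + 1)).union (ball_finite_aux G hconn v (k + 1))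
    set S : Finset V := hT.toFinset.erase x with hSdef
    have hxS : x ∉ S := Finset.notMem_erase x _
    have hmemS : ∀ w : V, w ∈ S ↔ w ≠ x ∧ (G.dist w u ≤ k + 1 ∨ G.dist w v ≤ k + 1) := by
      intro w
      simp [hSdef, Finset.mem_erase, Set.Finite.mem_toFinset]
    -- sphere inclusions
    have hsubU : ∀ i : ℕ, i ≤ k + 1 → {w : V | G.dist w u = i} ⊆ (S : Set V) := by
      intro i hi w hw
      simp only [Set.mem_setOf_eq] at hw
      rw [Finset.mem_coe, hmemS]
      refine ⟨?_, Or.inl (hw ▸ hi)⟩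
      rintro rfl; omega
    have hsubV : ∀ i : ℕ, i ≤ k → {w : V | G.dist w v = i} ⊆ (S : Set V) := by
      intro i hi w hw
      simp only [Set.mem_setOf_eq] at hw
      rw [Finset.mem_coe, hmemS]
      refine ⟨?_, Or.inr (hw ▸ (by omega))⟩
      rintro rfl; omega
    -- the reveal map and local sphere sums
    set Y : Ω → (↥S → Fin D) := fun ω j => η (j : V) ω with hYdef
    have hYmeas : Measurable Y := measurable_pi_lambda _ (fun j => hmeas _)
    set Zy : V → ℕ → (↥S → Fin D) → ℕ := fun p i y =>
      ∑ j : ↥S, if G.dist (j : V) p = i then ((y j : ℕ) + 1) else 0 with hZydef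
    -- Zy evaluated on Y ω is a filtered sum over S
    have hZyY : ∀ (p : V) (i : ℕ) (ω : Ω), Zy p i (Y ω)
        = ∑ w ∈ S.filter (fun w => G.dist w p = i), ((η w ω : ℕ) + 1) := by
      intro p i ω
      rw [hZydef]
      calc (∑ j : ↥S, if G.dist (j : V) p = i then ((Y ω j : ℕ) + 1) else 0)
          = ∑ w ∈ S, (if G.dist w p = i then ((η w ω : ℕ) + 1) else 0) :=
            Finset.sum_coe_sort S (fun w => if G.dist w p = i then ((η w ω : ℕ) + 1) else 0)
        _ = _ := (Finset.sum_filter _ _).symm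
    -- translation of sphereSum for spheres contained in S
    have htrans : ∀ (p : V) (i : ℕ), {w : V | G.dist w p = i} ⊆ (S : Set V) →
        ∀ ω : Ω, sphereSum G (fun w => η w ω) p i = Zy p i (Y ω) := by
      intro p i hsub ω
      rw [hsum, hZyY]
      apply Finset.sum_congr _ (fun _ _ => rfl)
      ext w
      simp only [Set.Finite.mem_toFinset, Set.mem_setOf_eq, Finset.mem_filter]
      exact ⟨fun h => ⟨hsub h, h⟩, fun h => h.2⟩
    -- translation at level k+1 for v: the sphere contains x and otherwise sits in S
    have htransv : ∀ ω : Ω, sphereSum G (fun w => η w ω) v (k + 1)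
        = ((η x ω : ℕ) + 1) + Zy v (k + 1) (Y ω) := by
      intro ω
      rw [hsum, hZyY]
      have h1 : (hsphfin v (k + 1)).toFinset
          = insert x (S.filter (fun w => G.dist w v = k + 1)) := by
        ext w
        simp only [Set.Finite.mem_toFinset, Set.mem_setOf_eq, Finset.mem_insert,
          Finset.mem_filter, hmemS]
        constructor
        · intro h
          by_cases hwx : w = x
          · exact Or.inl hwx
          · exact Or.inr ⟨⟨hwx, Or.inr h.le⟩, h⟩
        · rintro (rfl | h)
          · exact hxv
          · exact h.2
      rw [h1, Finset.sum_insert (by simp [Finset.mem_filter, hxS])]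
    -- the forced value of η x
    set g : (↥S → Fin D) → Fin D := fun y =>
      ⟨(Zy u (k + 1) y - Zy v (k + 1) y - 1) % D, Nat.mod_lt _ hD0⟩ with hgdef
    set F : Finset (↥S → Fin D) :=
      Finset.univ.filter (fun y => ∀ i : ℕ, 1 ≤ i → i ≤ k → Zy u i y = Zy v i y) with hFdef
    have hmemF : ∀ y, y ∈ F ↔ ∀ i : ℕ, 1 ≤ i → i ≤ k → Zy u i y = Zy v i y := by
      intro y; simp [hFdef]
    -- level-k event equals {Y ∈ F}
    have hEk : {ω : Ω | ∀ i : ℕ, 1 ≤ i → i ≤ k →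
          sphereSum G (fun w => η w ω) u i = sphereSum G (fun w => η w ω) v i}
        = {ω : Ω | Y ω ∈ F} := by
      ext ω
      simp only [Set.mem_setOf_eq, hmemF]
      constructor
      · intro h i h1 h2
        rw [← htrans u i (hsubU i (by omega)) ω, ← htrans v i (hsubV i h2) ω]
        exact h i h1 h2
      · intro h i h1 h2
        rw [htrans u i (hsubU i (by omega)) ω, htrans v i (hsubV i h2) ω]
        exact h i h1 h2
    -- the inclusion into a union of product events
    have hsub2 : {ω : Ω | ∀ i : ℕ, 1 ≤ i → i ≤ k + 1 →
          sphereSum G (fun w => η w ω) u i = sphereSum G (fun w => η w ω) v i}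
        ⊆ ⋃ y ∈ F, ({ω : Ω | Y ω = y} ∩ {ω : Ω | η x ω = g y}) := by
      intro ω hω
      simp only [Set.mem_setOf_eq] at hω
      have hYF : Y ω ∈ F := by
        rw [hmemF]
        intro i h1 h2
        rw [← htrans u i (hsubU i (by omega)) ω, ← htrans v i (hsubV i h2) ω]
        exact hω i h1 (by omega)
      refine Set.mem_biUnion hYF ⟨rfl, ?_⟩
      have h := hω (k + 1) (by omega) le_rfl
      rw [htrans u (k + 1) (hsubU (k + 1) le_rfl) ω, htransv ω] at h
      have hx' : Zy u (k + 1) (Y ω) - Zy v (k + 1) (Y ω) - 1 = (η x ω : ℕ) := by omega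
      apply Fin.ext
      show (η x ω : ℕ) = (Zy u (k + 1) (Y ω) - Zy v (k + 1) (Y ω) - 1) % D
      rw [hx', Nat.mod_eq_of_lt (η x ω).isLt]
    -- independence of η x and Y
    have hdisj : Disjoint ({x} : Finset V) S := Finset.disjoint_singleton_left.mpr hxS
    have hind1 := hindep.indepFun_finset {x} S hdisj hmeas
    have hind : IndepFun (η x) Y P := by
      have h2 := hind1.comp
        (φ := fun f : ((({x} : Finset V) : Type _) → Fin D) =>
          f ⟨x, Finset.mem_singleton_self x⟩)
        (ψ := id) (measurable_pi_apply (X := fun _ : (({x} : Finset V) : Type _) => Fin D)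
          ⟨x, Finset.mem_singleton_self x⟩) measurable_id
      exact h2
    -- the measure computation
    calc P {ω : Ω | ∀ i : ℕ, 1 ≤ i → i ≤ k + 1 →
          sphereSum G (fun w => η w ω) u i = sphereSum G (fun w => η w ω) v i}
        ≤ P (⋃ y ∈ F, ({ω : Ω | Y ω = y} ∩ {ω : Ω | η x ω = g y})) := measure_mono hsub2
      _ ≤ ∑ y ∈ F, P ({ω : Ω | Y ω = y} ∩ {ω : Ω | η x ω = g y}) :=
          measure_biUnion_finset_le _ _
      _ = ∑ y ∈ F, P {ω : Ω | Y ω = y} * (D : ℝ≥0∞)⁻¹ := by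
          refine Finset.sum_congr rfl (fun y _ => ?_)
          have hset : {ω : Ω | Y ω = y} ∩ {ω : Ω | η x ω = g y}
              = (η x) ⁻¹' {g y} ∩ Y ⁻¹' {y} := by
            ext ω
            simp only [Set.mem_inter_iff, Set.mem_setOf_eq, Set.mem_preimage,
              Set.mem_singleton_iff]
            tauto
          rw [hset, hind.measure_inter_preimage_eq_mul _ _ (measurableSet_singleton _)
            (measurableSet_singleton _)]
          have h3 : (η x) ⁻¹' {g y} = {ω : Ω | η x ω = g y} := rfl
          have h4 : Y ⁻¹' {y} = {ω : Ω | Y ω = y} := rfl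
          rw [h3, h4, hunif x (g y), mul_comm]
      _ = (D : ℝ≥0∞)⁻¹ * ∑ y ∈ F, P {ω : Ω | Y ω = y} := by
          rw [Finset.mul_sum]
          exact Finset.sum_congr rfl (fun y _ => mul_comm _ _)
      _ = (D : ℝ≥0∞)⁻¹ * P (⋃ y ∈ F, {ω : Ω | Y ω = y}) := by
          rw [measure_biUnion_finset ?_ ?_]
          · intro y _ y' _ hyy'
            simp only [Function.onFun, Set.disjoint_left, Set.mem_setOf_eq]
            intro ω h1 h2
            exact hyy' (h1 ▸ h2 ▸ rfl)
          · intro y _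
            exact hYmeas (measurableSet_singleton y)
      _ = (D : ℝ≥0∞)⁻¹ * P {ω : Ω | Y ω ∈ F} := by
          congr 1
          congr 1
          ext ω
          simp only [Set.mem_iUnion, Set.mem_setOf_eq, exists_prop]
          exact ⟨fun ⟨y, hy, hEq⟩ => hEq ▸ hy, fun h => ⟨Y ω, h, rfl⟩⟩
      _ ≤ (D : ℝ≥0∞)⁻¹ * (D : ℝ≥0∞)⁻¹ ^ k := by
          rw [← hEk]
          exact mul_le_mul_right ih _
      _ = (D : ℝ≥0∞)⁻¹ ^ (k + 1) := (pow_succ' _ _).symm
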